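/- For every real ν and every λ on the unit circle, the composition operator C_{φ_λ} induced by the rotation φ_λ(z) = λz is recurrent on the weighted Dirichlet space S_ν; in fact every f ∈ S_ν is a recurrent vector for C_{φ_λ}. -/

import Mathlib

open Filter Topology

/-- The squared `S_ν` norm of a coefficient sequence. -/
noncomputable def snormSq (ν : ℝ) (a : ℕ → ℂ) : ℝ :=
  ∑' n : ℕ, ‖a n‖ ^ 2 * ((n : ℝ) + 1) ^ (2 * ν)

/-- Membership in the weighted Dirichlet space `S_ν`, in terms of Taylor coefficients. -/
def memS (ν : ℝ) (a : ℕ → ℂ) : Prop :=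
  Summable fun n : ℕ => ‖a n‖ ^ 2 * ((n : ℝ) + 1) ^ (2 * ν)

lemma pow_mul_sub_one_bound (lam : ℂ) (hlam : ‖lam‖ = 1) (q : ℕ) :
    ∀ M : ℕ, ‖lam ^ (q * M) - 1‖ ≤ M * ‖lam ^ q - 1‖ := by
  intro M
  induction M with
  | zero => simp
  | succ M ih =>
    have h1 : lam ^ (q * (M + 1)) - 1
        = lam ^ (q * M) * (lam ^ q - 1) + (lam ^ (q * M) - 1) := by
      rw [Nat.mul_succ, pow_add]; ring
    calc ‖lam ^ (q * (M + 1)) - 1‖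
        ≤ ‖lam ^ (q * M) * (lam ^ q - 1)‖ + ‖lam ^ (q * M) - 1‖ := by
          rw [h1]; exact norm_add_le _ _
      _ ≤ 1 * ‖lam ^ q - 1‖ + M * ‖lam ^ q - 1‖ := by
          rw [norm_mul, norm_pow, hlam, one_pow]
          exact add_le_add le_rfl ih
      _ = (M + 1 : ℕ) * ‖lam ^ q - 1‖ := by push_cast; ring

lemma exists_small_pow (lam : ℂ) (hlam : ‖lam‖ = 1) {ε : ℝ} (hε : 0 < ε) :
    ∃ q : ℕ, 0 < q ∧ ‖lam ^ q - 1‖ < ε := by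
  obtain ⟨b, _, φ, hφ, hb⟩ := tendsto_subseq_of_bounded
    (Metric.isBounded_closedBall (x := (0 : ℂ)) (r := 1))
    (x := fun n => lam ^ n) (fun n => by
      simp [Metric.mem_closedBall, dist_eq_norm, norm_pow, hlam])
  have h2 : Tendsto (fun j => lam ^ φ (j + 1) - lam ^ φ j) atTop (𝓝 0) := by
    have := (hb.comp (tendsto_add_atTop_nat 1)).sub hb
    simpa using this
  have h3 : Tendsto (fun j => ‖lam ^ (φ (j + 1) - φ j) - 1‖) atTop (𝓝 0) := by
    have heq : ∀ j, ‖lam ^ (φ (j + 1) - φ j) - 1‖ = ‖lam ^ φ (j + 1) - lam ^ φ j‖ := by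
      intro j
      have hle : φ j ≤ φ (j + 1) := (hφ (Nat.lt_succ_self j)).le
      have : lam ^ φ (j + 1) - lam ^ φ j
          = lam ^ φ j * (lam ^ (φ (j + 1) - φ j) - 1) := by
        rw [mul_sub, mul_one, ← pow_add, Nat.add_sub_cancel' hle]
      rw [this, norm_mul, norm_pow, hlam, one_pow, one_mul]
    simpa only [heq, norm_zero] using h2.norm
  rw [Metric.tendsto_atTop] at h3
  obtain ⟨J, hJ⟩ := h3 ε hε
  refine ⟨φ (J + 1) - φ J, Nat.sub_pos_of_lt (hφ (Nat.lt_succ_self J)), ?_⟩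
  have := hJ J le_rfl
  rwa [Real.dist_eq, sub_zero, abs_of_nonneg (norm_nonneg _)] at this

lemma exists_large_pow (lam : ℂ) (hlam : ‖lam‖ = 1) {ε : ℝ} (hε : 0 < ε) (N : ℕ) :
    ∃ p : ℕ, N < p ∧ ‖lam ^ p - 1‖ < ε := by
  obtain ⟨q, hq, hqε⟩ := exists_small_pow lam hlam
    (div_pos hε (by positivity : (0 : ℝ) < N + 1))
  refine ⟨q * (N + 1), ?_, ?_⟩
  · calc N < N + 1 := Nat.lt_succ_self N
      _ ≤ q * (N + 1) := Nat.le_mul_of_pos_left _ hq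
  · calc ‖lam ^ (q * (N + 1)) - 1‖ ≤ (N + 1 : ℕ) * ‖lam ^ q - 1‖ :=
        pow_mul_sub_one_bound lam hlam q (N + 1)
      _ < (N + 1 : ℕ) * (ε / (N + 1)) := by
        apply mul_lt_mul_of_pos_left _ (by positivity)
        · exact hqε
      _ = ε := by push_cast; field_simp

theorem stmt7 (ν : ℝ) (lam : ℂ) (hlam : ‖lam‖ = 1) (a : ℕ → ℂ) (ha : memS ν a) :
    ∃ n : ℕ → ℕ, StrictMono n ∧ (∀ k, 0 < n k) ∧
      Tendsto (fun k => snormSq ν (fun m => lam ^ (m * n k) * a m - a m))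
        atTop (𝓝 0) := by
  obtain ⟨n, hmono, hn⟩ := extraction_forall_of_frequently
    (P := fun k p => 0 < p ∧ ‖lam ^ p - 1‖ < 1 / (k + 1))
    (fun k => frequently_atTop.mpr fun N => by
      obtain ⟨p, hp, hpε⟩ := exists_large_pow lam hlam
        (by positivity : (0 : ℝ) < 1 / (k + 1)) N
      exact ⟨p, hp.le, Nat.lt_of_le_of_lt (Nat.zero_le N) hp, hpε⟩)
  refine ⟨n, hmono, fun k => (hn k).1, ?_⟩
  -- λ ^ n k → 1
  have hlim : Tendsto (fun k => lam ^ n k) atTop (𝓝 1) := by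
    rw [tendsto_iff_norm_sub_tendsto_zero]
    apply squeeze_zero (fun k => norm_nonneg _) (fun k => (hn k).2.le)
    exact tendsto_one_div_add_atTop_nhds_zero_nat
  have hw : ∀ m : ℕ, (0 : ℝ) ≤ ((m : ℝ) + 1) ^ (2 * ν) := fun m =>
    Real.rpow_nonneg (by positivity) _
  have hpt : ∀ m : ℕ, Tendsto
      (fun k => ‖lam ^ (m * n k) * a m - a m‖ ^ 2 * ((m : ℝ) + 1) ^ (2 * ν))
      atTop (𝓝 0) := by
    intro m
    have h1 : Tendsto (fun k => (lam ^ n k) ^ m) atTop (𝓝 1) := by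
      simpa [Function.comp_def] using ((continuous_pow m).tendsto 1).comp hlim
    have h2 : Tendsto (fun k => ‖(lam ^ n k) ^ m * a m - a m‖ ^ 2
        * ((m : ℝ) + 1) ^ (2 * ν)) atTop (𝓝 0) := by
      have hc : Continuous fun z : ℂ => ‖z * a m - a m‖ ^ 2 * ((m : ℝ) + 1) ^ (2 * ν) := by
        continuity
      have := (hc.tendsto 1).comp h1
      simpa [Function.comp_def] using this
    refine h2.congr fun k => ?_
    rw [mul_comm m (n k), pow_mul]
  have hbound : ∀ k m, ‖‖lam ^ (m * n k) * a m - a m‖ ^ 2 * ((m : ℝ) + 1) ^ (2 * ν)‖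
      ≤ 4 * (‖a m‖ ^ 2 * ((m : ℝ) + 1) ^ (2 * ν)) := by
    intro k m
    rw [Real.norm_of_nonneg (by positivity), ← mul_assoc]
    apply mul_le_mul_of_nonneg_right _ (hw m)
    have h1 : ‖lam ^ (m * n k) * a m - a m‖ ≤ 2 * ‖a m‖ := by
      calc ‖lam ^ (m * n k) * a m - a m‖ ≤ ‖lam ^ (m * n k) * a m‖ + ‖a m‖ :=
          norm_sub_le _ _
        _ = 2 * ‖a m‖ := by rw [norm_mul, norm_pow, hlam, one_pow, one_mul]; ring
    calc ‖lam ^ (m * n k) * a m - a m‖ ^ 2 ≤ (2 * ‖a m‖) ^ 2 :=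
        pow_le_pow_left₀ (norm_nonneg _) h1 2
      _ = 4 * ‖a m‖ ^ 2 := by ring
  have := tendsto_tsum_of_dominated_convergence (𝓕 := atTop)
    (f := fun k m => ‖lam ^ (m * n k) * a m - a m‖ ^ 2 * ((m : ℝ) + 1) ^ (2 * ν))
    (g := fun _ => (0 : ℝ)) (ha.mul_left 4) hpt (Eventually.of_forall hbound)
  simpa [snormSq, tsum_zero] using this
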